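/- Let n be a natural number with n ≡ 1 (mod 4) and n ≥ 5. Then for every N, the following identities hold in MvPolynomial (Fin N) (ZMod 2): I_{n,0} = 0, I_{n,1} = 0, I_{n,2} = e_1², and I_{n,3} = e_1·e_2 + e_3. -/

import Mathlib

open MvPolynomial

section Aux

open Finset

private theorem evencast' (x : ℤ) (h : x % 2 = 0) : ((x : ℤ) : ZMod 2) = 0 :=
  (ZMod.intCast_zmod_eq_zero_iff_dvd _ 2).mpr (by omega)

private theorem oddcast' (x : ℤ) (h : x % 2 = 1) : ((x : ℤ) : ZMod 2) = 1 := by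
  have h0 : ((x - 1 : ℤ) : ZMod 2) = 0 :=
    (ZMod.intCast_zmod_eq_zero_iff_dvd _ 2).mpr (by omega)
  push_cast at h0
  linear_combination h0

variable {σ : Type*} [Fintype σ] [DecidableEq σ] {R : Type*} [CommSemiring R]

private theorem hsymm_two' : hsymm σ R 2 = psum σ R 2 + esymm σ R 2 := by
  rw [hsymm, psum, esymm]
  rw [← Finset.sum_filter_add_sum_filter_not (univ : Finset (Sym σ 2))
    (fun s => ¬ s.1.Nodup)]
  congr 1
  · refine (Finset.sum_bij (fun (i : σ) _ => (⟨{i, i}, rfl⟩ : Sym σ 2)) ?_ ?_ ?_ ?_).symm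
    · intro i _; refine Finset.mem_filter.mpr ⟨Finset.mem_univ (α := Sym σ 2) _, ?_⟩
      show ¬ Multiset.Nodup ({i, i} : Multiset σ); simp
    · intro i _ i' _ h
      have : ({i, i} : Multiset σ) = {i', i'} := congrArg Subtype.val h
      have hc := congrArg (Multiset.count i) this
      by_cases h' : i = i'
      · exact h'
      · simp [Multiset.count_cons, Multiset.count_singleton, h'] at hc
    · intro s hs
      replace hs : s ∈ (univ : Finset (Sym σ 2)) ∧ ¬ s.1.Nodup :=
        ⟨Finset.mem_univ (α := Sym σ 2) _, (Finset.mem_filter.mp hs).2⟩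
      obtain ⟨a, b, hab⟩ := Multiset.card_eq_two.mp s.2
      have hnd : ¬ (s.1.Nodup) := hs.2
      rw [hab] at hnd
      have : a = b := by simpa [Multiset.nodup_cons] using hnd
      exact ⟨a, mem_univ a, by apply Subtype.ext; rw [hab, this]⟩
    · intro i _; simp [pow_two]
  · refine (Finset.sum_bij (fun (t : Finset σ) ht =>
      (⟨t.1, (Finset.mem_powersetCard.mp ht).2⟩ : Sym σ 2)) ?_ ?_ ?_ ?_).symm
    · intro t ht
      exact Finset.mem_filter.mpr ⟨Finset.mem_univ (α := Sym σ 2) _, by simpa using t.2⟩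
    · intro t _ t' _ h
      exact Finset.val_inj.mp (congrArg Subtype.val h)
    · intro s hs
      replace hs : s ∈ (univ : Finset (Sym σ 2)) ∧ s.1.Nodup :=
        ⟨Finset.mem_univ (α := Sym σ 2) _, by simpa using (Finset.mem_filter.mp hs).2⟩
      refine ⟨s.1.toFinset, Finset.mem_powersetCard.mpr ⟨Finset.subset_univ _, ?_⟩, ?_⟩
      · rw [Multiset.toFinset_card_of_nodup hs.2]; exact s.2
      · apply Subtype.ext
        simp only [Multiset.toFinset_val]
        exact hs.2.dedup
    · intro t _
      exact Finset.prod_eq_multiset_prod t X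

private theorem hsymm_three' :
    hsymm σ R 3 = esymm σ R 1 * psum σ R 2 + esymm σ R 3 := by
  rw [hsymm, esymm_one, psum, Finset.sum_mul_sum, esymm, ← Finset.sum_product']
  rw [← Finset.sum_filter_add_sum_filter_not (univ : Finset (Sym σ 3))
    (fun s => ¬ s.1.Nodup)]
  congr 1
  · refine (Finset.sum_bij
      (fun (p : σ × σ) _ => (⟨{p.2, p.2, p.1}, rfl⟩ : Sym σ 3)) ?_ ?_ ?_ ?_).symm
    · intro p _
      refine Finset.mem_filter.mpr ⟨Finset.mem_univ (α := Sym σ 3) _, ?_⟩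
      show ¬ Multiset.Nodup ({p.2, p.2, p.1} : Multiset σ)
      simp [Multiset.nodup_cons]
    · intro p _ q _ h
      have hm : ({p.2, p.2, p.1} : Multiset σ) = {q.2, q.2, q.1} :=
        congrArg Subtype.val h
      have h2 : p.2 = q.2 := by
        by_contra hne
        have hq2 : q.2 ≠ p.2 := Ne.symm hne
        have hc := congrArg (Multiset.count q.2) hm
        simp only [Multiset.insert_eq_cons, Multiset.count_cons,
          Multiset.count_singleton, hq2, if_false, if_true] at hc
        split_ifs at hc <;> omega
      rw [h2] at hm
      have h1 : p.1 = q.1 := by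
        simpa [Multiset.insert_eq_cons] using hm
      exact Prod.ext h1 h2
    · intro s hs
      replace hs : ¬ s.1.Nodup := (Finset.mem_filter.mp hs).2
      obtain ⟨a, b, c, habc⟩ := Multiset.card_eq_three.mp s.2
      have hnd := hs
      rw [habc] at hnd
      have hcase : a = b ∨ a = c ∨ b = c := by
        by_contra hcon
        push_neg at hcon
        exact hnd (by simp [Multiset.nodup_cons, hcon.1, hcon.2.1, hcon.2.2])
      rcases hcase with h | h | h
      · exact ⟨(c, a), mem_univ _, Subtype.ext (by rw [habc, ← h])⟩
      · refine ⟨(b, a), mem_univ _, Subtype.ext ?_⟩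
        rw [habc, ← h]
        refine Multiset.ext.mpr fun x => ?_
        simp only [Multiset.insert_eq_cons, Multiset.count_cons,
          Multiset.count_singleton]
        split_ifs <;> omega
      · refine ⟨(a, b), mem_univ _, Subtype.ext ?_⟩
        rw [habc, ← h]
        refine Multiset.ext.mpr fun x => ?_
        simp only [Multiset.insert_eq_cons, Multiset.count_cons,
          Multiset.count_singleton]
        split_ifs <;> omega
    · intro p _
      simp only [Multiset.insert_eq_cons, Sym.coe_mk, Multiset.map_cons,
        Multiset.prod_cons, Multiset.map_singleton, Multiset.prod_singleton]
      ring
  · refine (Finset.sum_bij (fun (t : Finset σ) ht =>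
      (⟨t.1, (Finset.mem_powersetCard.mp ht).2⟩ : Sym σ 3)) ?_ ?_ ?_ ?_).symm
    · intro t ht
      exact Finset.mem_filter.mpr ⟨Finset.mem_univ (α := Sym σ 3) _, by simpa using t.2⟩
    · intro t _ t' _ h
      exact Finset.val_inj.mp (congrArg Subtype.val h)
    · intro s hs
      replace hs : s.1.Nodup := by simpa using (Finset.mem_filter.mp hs).2
      refine ⟨s.1.toFinset, Finset.mem_powersetCard.mpr ⟨Finset.subset_univ _, ?_⟩, ?_⟩
      · rw [Multiset.toFinset_card_of_nodup hs]; exact s.2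
      · apply Subtype.ext
        simp only [Multiset.toFinset_val]
        exact hs.dedup
    · intro t _
      exact Finset.prod_eq_multiset_prod t X

end Aux

/-- The polynomial `I_{n,d}` in `N` variables over `ZMod 2`:
`ε(n-d+1)·h_d + ∑_{j=1}^{d} ε(C(n,j))·h_{d-j}·p_j`. -/
noncomputable def Ipoly (N n d : ℕ) : MvPolynomial (Fin N) (ZMod 2) :=
  C (((n : ℤ) - (d : ℤ) + 1 : ℤ) : ZMod 2) * hsymm (Fin N) (ZMod 2) d +
    ∑ j ∈ Finset.Icc 1 d,
      C (((n.choose j : ℤ)) : ZMod 2) * hsymm (Fin N) (ZMod 2) (d - j) *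
        psum (Fin N) (ZMod 2) j

theorem stmt_13 (n : ℕ) (h4 : n % 4 = 1) (hn : 5 ≤ n) (N : ℕ) :
    Ipoly N n 0 = 0 ∧ Ipoly N n 1 = 0 ∧
    Ipoly N n 2 = (esymm (Fin N) (ZMod 2) 1) ^ 2 ∧
    Ipoly N n 3 = esymm (Fin N) (ZMod 2) 1 * esymm (Fin N) (ZMod 2) 2 +
      esymm (Fin N) (ZMod 2) 3 := by
  obtain ⟨m, rfl⟩ : ∃ m, n = 4 * m + 5 := ⟨(n - 5) / 4, by omega⟩
  set n := 4 * m + 5 with hn5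
  have c0 : ((((n : ℕ) : ℤ) - (0:ℤ) + 1 : ℤ) : ZMod 2) = 0 := evencast' _ (by omega)
  have c1 : ((((n : ℕ) : ℤ) - (1:ℤ) + 1 : ℤ) : ZMod 2) = 1 := oddcast' _ (by omega)
  have c2 : ((((n : ℕ) : ℤ) - (2:ℤ) + 1 : ℤ) : ZMod 2) = 0 := evencast' _ (by omega)
  have c3 : ((((n : ℕ) : ℤ) - (3:ℤ) + 1 : ℤ) : ZMod 2) = 1 := oddcast' _ (by omega)
  have ch1 : ((n.choose 1 : ℤ) : ZMod 2) = 1 := by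
    rw [Nat.choose_one_right]
    exact oddcast' _ (by omega)
  have ch2 : ((n.choose 2 : ℤ) : ZMod 2) = 0 := by
    apply evencast'
    have h1 : n.choose 2 = n * (n - 1) / 2 := Nat.choose_two_right n
    have h2 : n * (n - 1) = ((4 * m + 5) * (2 * m + 2)) * 2 := by
      rw [hn5]; norm_num; ring
    have h3 : n.choose 2 = (4 * m + 5) * (2 * m + 2) := by
      rw [h1, h2, Nat.mul_div_cancel _ (by norm_num)]
    have hdvd : (2 : ℤ) ∣ (n.choose 2 : ℤ) := by
      refine ⟨(4 * m + 5) * (m + 1), ?_⟩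
      rw [h3]; push_cast; ring
    omega
  have ch3 : ((n.choose 3 : ℤ) : ZMod 2) = 0 := by
    apply evencast'
    have hd := Nat.descFactorial_eq_factorial_mul_choose n 3
    have e1 : n.descFactorial 3 = (4 * m + 3) * ((4 * m + 4) * ((4 * m + 5) * 1)) := by
      rw [hn5]; simp [Nat.descFactorial]
    have e2 : n.descFactorial 3 = 4 * ((4 * m + 3) * ((m + 1) * (4 * m + 5))) := by
      rw [e1]; ring
    rw [e2, show Nat.factorial 3 = 6 from rfl] at hd
    have hdvd : (2 : ℤ) ∣ (n.choose 3 : ℤ) := by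
      have h2d : 2 ∣ n.choose 3 := by omega
      exact_mod_cast Int.natCast_dvd_natCast.mpr h2d
    omega
  have htwo : (2 : MvPolynomial (Fin N) (ZMod 2)) = 0 := by
    have := CharP.cast_eq_zero (MvPolynomial (Fin N) (ZMod 2)) 2
    exact_mod_cast this
  have hI1 : (Finset.Icc 1 1 : Finset ℕ) = {1} := rfl
  have hI2 : (Finset.Icc 1 2 : Finset ℕ) = {1, 2} := rfl
  have hI3 : (Finset.Icc 1 3 : Finset ℕ) = {1, 2, 3} := rfl
  refine ⟨?_, ?_, ?_, ?_⟩
  · rw [Ipoly, show (Finset.Icc 1 0 : Finset ℕ) = ∅ from rfl, Finset.sum_empty]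
    simp only [Nat.cast_zero]
    rw [c0]
    simp
  · rw [Ipoly, hI1, Finset.sum_singleton]
    simp only [Nat.cast_one]
    rw [c1, ch1, show (1 - 1 : ℕ) = 0 from rfl, hsymm_zero, hsymm_one, psum_one]
    rw [map_one]
    linear_combination (∑ i : Fin N, (X i : MvPolynomial (Fin N) (ZMod 2))) * htwo
  · rw [Ipoly, hI2]
    rw [show ({1, 2} : Finset ℕ) = insert 1 {2} from rfl,
      Finset.sum_insert (by decide), Finset.sum_singleton]
    simp only [Nat.cast_ofNat]
    rw [c2, ch1, ch2, show (2 - 1 : ℕ) = 1 from rfl, show (2 - 2 : ℕ) = 0 from rfl,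
      hsymm_zero, hsymm_one, psum_one, esymm_one, map_one, map_zero]
    ring
  · rw [Ipoly, hI3]
    rw [show ({1, 2, 3} : Finset ℕ) = insert 1 (insert 2 {3}) from rfl,
      Finset.sum_insert (by decide), Finset.sum_insert (by decide), Finset.sum_singleton]
    simp only [Nat.cast_ofNat]
    rw [c3, ch1, ch2, ch3, show (3 - 1 : ℕ) = 2 from rfl, show (3 - 2 : ℕ) = 1 from rfl,
      show (3 - 3 : ℕ) = 0 from rfl, hsymm_zero, hsymm_one, psum_one, hsymm_two',
      hsymm_three', esymm_one, map_one, map_zero]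
    linear_combination ((∑ i : Fin N, (X i : MvPolynomial (Fin N) (ZMod 2))) *
      psum (Fin N) (ZMod 2) 2) * htwo
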